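/- arXiv:1103.0705 — 2 statements merged into one kernel-verified Lean document; each statement's English description precedes it below -/
import Mathlib

section
/- For 0 < ε < π and positive integer n, ∫₀^ε (cos x - cos ε)^{(n-2)/2} cos(n x/2) dx = 2^{-n/2} √π · (Γ(n/2)/Γ((n+1)/2)) · (sin ε)^{n-1}. -/
open Real Set MeasureTheory intervalIntegral

lemma sin_lower {ε : ℝ} (hε0 : 0 < ε) (hεπ : ε < π) {t : ℝ} (h1 : ε/2 ≤ t) (h2 : t ≤ ε) :
    min (Real.sin (ε/2)) (Real.sin ε) ≤ Real.sin t := by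
  rcases le_or_gt t (π/2) with h | h
  · exact le_trans (min_le_left _ _)
      (Real.sin_le_sin_of_le_of_le_pi_div_two (by linarith) h h1)
  · refine le_trans (min_le_right _ _) ?_
    rw [← Real.sin_pi_sub t, ← Real.sin_pi_sub ε]
    exact Real.sin_le_sin_of_le_of_le_pi_div_two (by linarith) (by linarith) (by linarith)

lemma cos_lb {ε : ℝ} (hε0 : 0 < ε) (hεπ : ε < π) {x : ℝ} (hx0 : 0 ≤ x) (hxε : x ≤ ε) :
    min (Real.sin (ε/2)) (Real.sin ε) * (2/π) / 2 * (ε - x) ≤ Real.cos x - Real.cos ε := by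
  have hπ := Real.pi_pos
  have h1 : Real.cos x - Real.cos ε = 2 * Real.sin ((x+ε)/2) * Real.sin ((ε-x)/2) := by
    rw [Real.cos_sub_cos]
    have : Real.sin ((x-ε)/2) = - Real.sin ((ε-x)/2) := by
      rw [← Real.sin_neg]; ring_nf
    rw [this]; ring
  rw [h1]
  have h2 : 2/π * ((ε-x)/2) ≤ Real.sin ((ε-x)/2) :=
    Real.mul_le_sin (by linarith) (by linarith)
  have h3 : min (Real.sin (ε/2)) (Real.sin ε) ≤ Real.sin ((x+ε)/2) :=
    sin_lower hε0 hεπ (by linarith) (by linarith)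
  have h4 : 0 < Real.sin (ε/2) := Real.sin_pos_of_pos_of_lt_pi (by linarith) (by linarith)
  have h5 : 0 < Real.sin ε := Real.sin_pos_of_pos_of_lt_pi hε0 hεπ
  have h6 : 0 < min (Real.sin (ε/2)) (Real.sin ε) := lt_min h4 h5
  have h7 : 0 ≤ 2/π * ((ε-x)/2) := mul_nonneg (by positivity) (by linarith)
  nlinarith [mul_le_mul h3 h2 h7 (le_trans h6.le h3)]

lemma integrable_aux {ε p : ℝ} (hε0 : 0 < ε) (hεπ : ε < π) (hp : -1 < p) {g : ℝ → ℝ}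
    (hg : Continuous g) :
    IntervalIntegrable (fun x => (Real.cos x - Real.cos ε) ^ p * g x) volume 0 ε := by
  rcases le_or_gt 0 p with h0p | h0p
  · apply ContinuousOn.intervalIntegrable
    exact (((Real.continuous_cos.sub continuous_const).continuousOn).rpow_const
      (fun x _ => Or.inr h0p)).mul hg.continuousOn
  · set c₀ : ℝ := min (Real.sin (ε/2)) (Real.sin ε) * (2/π) / 2 with hc₀def
    have hπ := Real.pi_pos
    have h4 : 0 < Real.sin (ε/2) := Real.sin_pos_of_pos_of_lt_pi (by linarith) (by linarith)
    have h5 : 0 < Real.sin ε := Real.sin_pos_of_pos_of_lt_pi hε0 hεπ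
    have hmin : 0 < min (Real.sin (ε/2)) (Real.sin ε) := lt_min h4 h5
    have hc₀ : 0 < c₀ := by
      rw [hc₀def]
      exact div_pos (mul_pos hmin (by positivity)) two_pos
    obtain ⟨M, hM⟩ := (isCompact_Icc (a := (0:ℝ)) (b := ε)).exists_bound_of_continuousOn
      hg.continuousOn
    have hM0 : 0 ≤ M := le_trans (norm_nonneg _) (hM 0 ⟨le_refl _, hε0.le⟩)
    have hmaj : IntervalIntegrable (fun x => c₀ ^ p * M * (ε - x) ^ p) volume 0 ε := by
      have h1 : IntervalIntegrable (fun x : ℝ => x ^ p) volume (ε - ε) (ε - 0) :=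
        intervalIntegrable_rpow' hp
      have h2 : IntervalIntegrable (fun x => (ε - x) ^ p) volume 0 ε := by
        have := (h1.comp_sub_left ε).symm
        simpa using this
      exact h2.const_mul (c₀ ^ p * M)
    apply hmaj.mono_fun
    · apply AEStronglyMeasurable.mul
      · exact ((Real.measurable_cos.sub measurable_const).pow_const p).aestronglyMeasurable
      · exact hg.aestronglyMeasurable.restrict
    · filter_upwards [MeasureTheory.ae_restrict_mem measurableSet_uIoc] with x hx
      rw [Set.uIoc_of_le hε0.le] at hx
      simp only [Real.norm_eq_abs]
      refine le_trans ?_ (le_abs_self _)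
      rw [abs_mul]
      have hεx : 0 ≤ ε - x := by linarith [hx.2]
      have hrhs0 : 0 ≤ c₀ ^ p * (ε - x) ^ p :=
        mul_nonneg (Real.rpow_nonneg hc₀.le _) (Real.rpow_nonneg hεx _)
      have hbase : 0 ≤ Real.cos x - Real.cos ε :=
        le_trans (mul_nonneg (by positivity : (0:ℝ) ≤ min (Real.sin (ε/2)) (Real.sin ε) * (2/π) / 2) hεx)
          (cos_lb hε0 hεπ hx.1.le hx.2)
      rcases eq_or_lt_of_le hx.2 with heq | hlt
      · rw [heq, sub_self, Real.zero_rpow (by linarith : p ≠ 0), abs_zero, zero_mul]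
        exact mul_nonneg (mul_nonneg (Real.rpow_nonneg hc₀.le _) hM0) (Real.rpow_nonneg (by linarith) _)
      · have hlb : c₀ * (ε - x) ≤ Real.cos x - Real.cos ε := cos_lb hε0 hεπ hx.1.le hx.2
        have hlb0 : 0 < c₀ * (ε - x) := mul_pos hc₀ (by linarith)
        have h1 : (Real.cos x - Real.cos ε) ^ p ≤ (c₀ * (ε - x)) ^ p :=
          Real.rpow_le_rpow_of_nonpos hlb0 hlb h0p.le
        rw [Real.mul_rpow hc₀.le hεx] at h1
        rw [abs_of_nonneg (Real.rpow_nonneg hbase p)]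
        have hgx : |g x| ≤ M := hM x ⟨hx.1.le, hx.2⟩
        calc (Real.cos x - Real.cos ε) ^ p * |g x|
            ≤ (c₀ ^ p * (ε - x) ^ p) * M := mul_le_mul h1 hgx (abs_nonneg _) hrhs0
          _ = c₀ ^ p * M * (ε - x) ^ p := by ring

noncomputable def Jint (ε p k : ℝ) : ℝ :=
  ∫ x in (0:ℝ)..ε, (Real.cos x - Real.cos ε) ^ p * Real.cos (k * x)

lemma cos_pos_sub {ε : ℝ} (hε0 : 0 < ε) (hεπ : ε < π) {x : ℝ} (hx : x ∈ Set.Ico 0 ε) :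
    0 < Real.cos x - Real.cos ε := by
  have hπ := Real.pi_pos
  have h4 : 0 < Real.sin (ε/2) := Real.sin_pos_of_pos_of_lt_pi (by linarith) (by linarith)
  have h5 : 0 < Real.sin ε := Real.sin_pos_of_pos_of_lt_pi hε0 hεπ
  have hmin : 0 < min (Real.sin (ε/2)) (Real.sin ε) := lt_min h4 h5
  have h1 := cos_lb hε0 hεπ hx.1 hx.2.le
  have h2 : 0 < min (Real.sin (ε/2)) (Real.sin ε) * (2/π) / 2 * (ε - x) := by
    have : 0 < ε - x := by linarith [hx.2]
    have : 0 < min (Real.sin (ε/2)) (Real.sin ε) * (2/π) / 2 :=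
      div_pos (mul_pos hmin (by positivity)) two_pos
    nlinarith
  linarith

lemma cos_nonneg_sub {ε : ℝ} (hε0 : 0 < ε) (hεπ : ε < π) {x : ℝ} (hx : x ∈ Set.Icc 0 ε) :
    0 ≤ Real.cos x - Real.cos ε := by
  rcases eq_or_lt_of_le hx.2 with h | h
  · rw [h]; simp
  · exact (cos_pos_sub hε0 hεπ ⟨hx.1, h⟩).le

lemma R1 {ε : ℝ} (hε0 : 0 < ε) (hεπ : ε < π) {m : ℝ} (hm : 1 ≤ m) (k : ℝ) :
    (k/2 - m/4) * Jint ε ((m-2)/2) (k-1) + (k/2 + m/4) * Jint ε ((m-2)/2) (k+1)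
      = k * Real.cos ε * Jint ε ((m-2)/2) k := by
  set p : ℝ := (m-2)/2 with hp
  have hp1 : -1 < p := by rw [hp]; linarith
  set b : ℝ → ℝ := fun x => Real.cos x - Real.cos ε with hb
  set F : ℝ → ℝ := fun x => b x ^ (m/2) * Real.sin (k*x) with hF
  set h' : ℝ → ℝ := fun x => b x ^ p *
      ((k/2 - m/4) * Real.cos ((k-1)*x) + (k/2 + m/4) * Real.cos ((k+1)*x)
        - k * Real.cos ε * Real.cos (k*x)) with hh'
  have hcontb : Continuous b := Real.continuous_cos.sub continuous_const
  have hFcont : ContinuousOn F (Set.Icc 0 ε) := by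
    apply ContinuousOn.mul
    · exact hcontb.continuousOn.rpow_const (fun x _ => Or.inr (by linarith))
    · exact (Real.continuous_sin.comp (continuous_const.mul continuous_id)).continuousOn
  have hderiv : ∀ x ∈ Set.Ioo 0 ε, HasDerivWithinAt F (h' x) (Set.Ioi x) x := by
    intro x hx
    have hbx : 0 < b x := cos_pos_sub hε0 hεπ ⟨hx.1.le, hx.2⟩
    have hd1 : HasDerivAt b (-Real.sin x) x := by
      exact (Real.hasDerivAt_cos x).sub_const (Real.cos ε)
    have hd2 : HasDerivAt (fun y => b y ^ (m/2))
        (m/2 * b x ^ (m/2 - 1) * (-Real.sin x)) x := by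
      exact (Real.hasDerivAt_rpow_const (Or.inl hbx.ne')).comp x hd1
    have hd3 : HasDerivAt (fun y => Real.sin (k*y)) (Real.cos (k*x) * k) x := by
      exact (Real.hasDerivAt_sin (k*x)).comp x (by simpa using (hasDerivAt_id x).const_mul k)
    have hd4 := hd2.mul hd3
    refine (hd4.congr_deriv ?_).hasDerivWithinAt
    have e1 : m/2 - 1 = p := by rw [hp]; ring
    have e2 : b x ^ (m/2) = b x ^ p * b x := by
      rw [hp, show (m-2)/2 = m/2 - 1 by ring, Real.rpow_sub hbx, Real.rpow_one]
      field_simp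
    rw [e1, e2, hh']
    simp only
    rw [show (k-1)*x = k*x - x by ring, show (k+1)*x = k*x + x by ring,
      Real.cos_sub, Real.cos_add, hb]
    ring
  have hinth' : IntervalIntegrable h' volume 0 ε := by
    apply integrable_aux hε0 hεπ hp1
    fun_prop
  have hFTC := intervalIntegral.integral_eq_sub_of_hasDeriv_right_of_le hε0.le hFcont hderiv hinth'
  have hF0 : F 0 = 0 := by simp [hF]
  have hFε : F ε = 0 := by
    simp only [hF, hb, sub_self]
    rw [Real.zero_rpow (by positivity : m/2 ≠ 0)]
    ring
  rw [hFε, hF0, sub_zero] at hFTC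
  -- now split the integral
  have i1 : IntervalIntegrable (fun x => b x ^ p * Real.cos ((k-1)*x)) volume 0 ε :=
    integrable_aux hε0 hεπ hp1 (by fun_prop)
  have i2 : IntervalIntegrable (fun x => b x ^ p * Real.cos ((k+1)*x)) volume 0 ε :=
    integrable_aux hε0 hεπ hp1 (by fun_prop)
  have i3 : IntervalIntegrable (fun x => b x ^ p * Real.cos (k*x)) volume 0 ε :=
    integrable_aux hε0 hεπ hp1 (by fun_prop)
  have hsplit : ∫ x in (0:ℝ)..ε, h' x
      = (k/2 - m/4) * Jint ε p (k-1) + (k/2 + m/4) * Jint ε p (k+1)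
        - k * Real.cos ε * Jint ε p k := by
    have : h' = fun x => (k/2 - m/4) * (b x ^ p * Real.cos ((k-1)*x))
        + ((k/2 + m/4) * (b x ^ p * Real.cos ((k+1)*x))
        - k * Real.cos ε * (b x ^ p * Real.cos (k*x))) := by
      funext x; rw [hh']; ring
    rw [this, intervalIntegral.integral_add (i1.const_mul _)
      ((i2.const_mul _).sub (i3.const_mul _)),
      intervalIntegral.integral_sub (i2.const_mul _) (i3.const_mul _),
      intervalIntegral.integral_const_mul, intervalIntegral.integral_const_mul,
      intervalIntegral.integral_const_mul]
    simp only [Jint, hb]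
    ring
  rw [hsplit] at hFTC
  linarith

lemma rpow_step {b m : ℝ} (hb : 0 ≤ b) (hm : 1 ≤ m) : b ^ (m/2) = b ^ ((m-2)/2) * b := by
  rcases eq_or_lt_of_le hb with h | h
  · rw [← h, Real.zero_rpow (by positivity : m/2 ≠ 0)]; ring
  · rw [show (m:ℝ)/2 = (m-2)/2 + 1 by ring, Real.rpow_add h, Real.rpow_one]

lemma R2 {ε : ℝ} (hε0 : 0 < ε) (hεπ : ε < π) {m : ℝ} (hm : 1 ≤ m) (k : ℝ) :
    Jint ε (m/2) k = (1/2) * Jint ε ((m-2)/2) (k-1) + (1/2) * Jint ε ((m-2)/2) (k+1)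
      - Real.cos ε * Jint ε ((m-2)/2) k := by
  set p : ℝ := (m-2)/2 with hp
  have hp1 : -1 < p := by rw [hp]; linarith
  set b : ℝ → ℝ := fun x => Real.cos x - Real.cos ε with hb
  have i1 : IntervalIntegrable (fun x => b x ^ p * Real.cos ((k-1)*x)) volume 0 ε :=
    integrable_aux hε0 hεπ hp1 (by fun_prop)
  have i2 : IntervalIntegrable (fun x => b x ^ p * Real.cos ((k+1)*x)) volume 0 ε :=
    integrable_aux hε0 hεπ hp1 (by fun_prop)
  have i3 : IntervalIntegrable (fun x => b x ^ p * Real.cos (k*x)) volume 0 ε :=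
    integrable_aux hε0 hεπ hp1 (by fun_prop)
  have hpt : Set.EqOn (fun x => b x ^ (m/2) * Real.cos (k*x))
      (fun x => (1/2) * (b x ^ p * Real.cos ((k-1)*x))
        + ((1/2) * (b x ^ p * Real.cos ((k+1)*x))
        - Real.cos ε * (b x ^ p * Real.cos (k*x)))) (Set.uIcc 0 ε) := by
    intro x hx
    rw [Set.uIcc_of_le hε0.le] at hx
    have hbx : 0 ≤ b x := cos_nonneg_sub hε0 hεπ hx
    simp only
    rw [rpow_step hbx hm, show (k-1)*x = k*x - x by ring, show (k+1)*x = k*x + x by ring,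
      Real.cos_sub, Real.cos_add, hb]
    ring
  have : Jint ε (m/2) k = ∫ x in (0:ℝ)..ε,
      ((1/2) * (b x ^ p * Real.cos ((k-1)*x))
        + ((1/2) * (b x ^ p * Real.cos ((k+1)*x))
        - Real.cos ε * (b x ^ p * Real.cos (k*x)))) := by
    exact intervalIntegral.integral_congr hpt
  rw [this, intervalIntegral.integral_add (i1.const_mul _)
      ((i2.const_mul _).sub (i3.const_mul _)),
    intervalIntegral.integral_sub (i2.const_mul _) (i3.const_mul _),
    intervalIntegral.integral_const_mul, intervalIntegral.integral_const_mul,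
    intervalIntegral.integral_const_mul]
  simp only [Jint, hb]
  ring

lemma cos_half_sq (x : ℝ) : Real.cos x = 1 - 2 * Real.sin (x/2) ^ 2 := by
  have h1 := Real.cos_sq (x/2)
  have h2 := Real.sin_sq_add_cos_sq (x/2)
  have : (2:ℝ) * (x/2) = x := by ring
  rw [this] at h1
  linarith

lemma base_two {ε : ℝ} (hε0 : 0 < ε) : Jint ε 0 1 = Real.sin ε := by
  rw [Jint]
  simp [Real.rpow_zero, one_mul]

lemma base_one {ε : ℝ} (hε0 : 0 < ε) (hεπ : ε < π) :
    Jint ε (-(1/2)) (1/2) = Real.sqrt 2 * π / 2 := by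
  have hπ := Real.pi_pos
  set a : ℝ := Real.sin (ε/2) with ha
  have ha0 : 0 < a := Real.sin_pos_of_pos_of_lt_pi (by linarith) (by linarith)
  have hcos : 0 < Real.cos (ε/2) :=
    Real.cos_pos_of_mem_Ioo ⟨by linarith, by linarith⟩
  set G : ℝ → ℝ := fun x => Real.sqrt 2 * Real.arcsin (Real.sin (x/2) / a) with hG
  set f' : ℝ → ℝ := fun x => (Real.cos x - Real.cos ε) ^ (-(1/2) : ℝ) * Real.cos ((1/2) * x)
    with hf'
  have hkey : ∀ x : ℝ, Real.cos x - Real.cos ε = 2 * (a^2 - Real.sin (x/2)^2) := by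
    intro x
    rw [cos_half_sq x, cos_half_sq ε, ha]
    ring
  have hG0 : G 0 = 0 := by simp [hG]
  have hGε : G ε = Real.sqrt 2 * π / 2 := by
    rw [hG]
    simp only
    rw [div_self ha0.ne', Real.arcsin_one]
    ring
  have hGcont : ContinuousOn G (Set.Icc 0 ε) := by
    apply Continuous.continuousOn
    exact continuous_const.mul (Real.continuous_arcsin.comp
      ((Real.continuous_sin.comp (continuous_id.div_const 2)).div_const a))
  have hint : IntervalIntegrable f' volume 0 ε := by
    apply integrable_aux hε0 hεπ (by norm_num)
    fun_prop
  have hderiv : ∀ x ∈ Set.Ioo 0 ε, HasDerivWithinAt G (f' x) (Set.Ioi x) x := by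
    intro x hx
    have hsx0 : 0 < Real.sin (x/2) := Real.sin_pos_of_pos_of_lt_pi (by linarith [hx.1]) (by linarith [hx.2])
    have hsxa : Real.sin (x/2) < a := by
      rw [ha]
      apply Real.strictMonoOn_sin ⟨by linarith [hx.1], by linarith [hx.2]⟩
        ⟨by linarith, by linarith⟩
      linarith [hx.2]
    set t : ℝ := Real.sin (x/2) / a with ht
    have ht0 : 0 < t := div_pos hsx0 ha0
    have ht1 : t < 1 := (div_lt_one ha0).2 hsxa
    have hd1 : HasDerivAt (fun y : ℝ => Real.sin (y/2) / a)
        (Real.cos (x/2) * (1/2) / a) x := by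
      have : HasDerivAt (fun y : ℝ => Real.sin (y/2)) (Real.cos (x/2) * (1/2)) x := by
        have hid : HasDerivAt (fun y : ℝ => y/2) (1/2 : ℝ) x := by
          simpa using (hasDerivAt_id x).div_const 2
        exact (Real.hasDerivAt_sin (x/2)).comp x hid
      exact this.div_const a
    have hd2 : HasDerivAt Real.arcsin (1 / Real.sqrt (1 - t^2)) t :=
      Real.hasDerivAt_arcsin (by linarith) (by linarith)
    have hd3 : HasDerivAt G
        (Real.sqrt 2 * (1 / Real.sqrt (1 - t^2) * (Real.cos (x/2) * (1/2) / a))) x := by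
      exact ((hd2.comp x hd1).const_mul (Real.sqrt 2))
    refine (hd3.congr_deriv ?_).hasDerivWithinAt
    -- show the value equals f' x
    have hb : Real.cos x - Real.cos ε = 2 * (a^2 - Real.sin (x/2)^2) := hkey x
    have hbpos : 0 < Real.cos x - Real.cos ε := by nlinarith
    have h1t : 1 - t^2 = (Real.cos x - Real.cos ε) / (2 * a^2) := by
      rw [hb, ht]
      field_simp
    have hsq : Real.sqrt (1 - t^2) = Real.sqrt (Real.cos x - Real.cos ε) / (Real.sqrt 2 * a) := by
      rw [h1t, Real.sqrt_div (by positivity) _, Real.sqrt_mul (by norm_num : (0:ℝ) ≤ 2),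
        Real.sqrt_sq ha0.le]
    rw [hsq, hf']
    simp only
    have hrp : (Real.cos x - Real.cos ε) ^ (-(1/2) : ℝ)
        = (Real.sqrt (Real.cos x - Real.cos ε))⁻¹ := by
      rw [Real.rpow_neg hbpos.le, Real.sqrt_eq_rpow]
    rw [hrp, show (1/2) * x = x/2 by ring]
    have hsb : 0 < Real.sqrt (Real.cos x - Real.cos ε) := Real.sqrt_pos.2 hbpos
    have hs2 : (0:ℝ) < Real.sqrt 2 := by positivity
    field_simp
    ring_nf
    rw [Real.sq_sqrt (by norm_num : (0:ℝ) ≤ 2)]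
    try ring
  have hFTC := intervalIntegral.integral_eq_sub_of_hasDeriv_right_of_le hε0.le hGcont hderiv hint
  rw [hG0, hGε, sub_zero] at hFTC
  rw [Jint, ← hFTC]

lemma step {ε : ℝ} (hε0 : 0 < ε) (hεπ : ε < π) {m : ℝ} (hm : 1 ≤ m) :
    Jint ε (m/2) (m/2 + 1)
      = m * Real.sin ε ^ 2 / (2*(m+1)) * Jint ε ((m-2)/2) (m/2) := by
  have h1 := R1 hε0 hεπ hm (m/2)
  have h2 := R1 hε0 hεπ hm (m/2 + 1)
  have h3 := R2 hε0 hεπ hm (m/2 + 1)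
  rw [show m/2 + 1 - 1 = m/2 from by ring] at h2 h3
  rw [show m/2 + 1 + 1 = m/2 + 2 from by ring] at h2 h3
  have hs : Real.sin ε ^ 2 = 1 - Real.cos ε ^ 2 := by
    nlinarith [Real.sin_sq_add_cos_sq ε]
  have hm2 : (m:ℝ)/2 ≠ 0 := by positivity
  have hA1 : Jint ε ((m-2)/2) (m/2 + 1) = Real.cos ε * Jint ε ((m-2)/2) (m/2) := by
    apply mul_left_cancel₀ hm2
    linear_combination h1
  have hne : (2:ℝ)*(m+1) ≠ 0 := by positivity
  rw [show m * Real.sin ε ^ 2 / (2*(m+1)) * Jint ε ((m-2)/2) (m/2)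
      = (m * Real.sin ε ^ 2 * Jint ε ((m-2)/2) (m/2)) / (2*(m+1)) from by ring,
    eq_div_iff hne]
  linear_combination (2*(m+1))*h3 + 2*h2 - (m*Real.cos ε)*hA1
    - (m * Jint ε ((m-2)/2) (m/2))*hs

lemma key {ε : ℝ} (hε0 : 0 < ε) (hεπ : ε < π) :
    ∀ n : ℕ, 1 ≤ n →
    Jint ε (((n:ℝ)-2)/2) ((n:ℝ)/2)
      = 2 ^ (-(n:ℝ)/2) * Real.sqrt π * (Real.Gamma ((n:ℝ)/2) / Real.Gamma (((n:ℝ)+1)/2))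
          * Real.sin ε ^ (n-1) := by
  intro n
  induction n using Nat.strong_induction_on with
  | _ n ih =>
    intro hn
    have hππ := Real.pi_pos
    have hsqπ : Real.sqrt π * Real.sqrt π = π := Real.mul_self_sqrt hππ.le
    have hsqπ0 : (0:ℝ) < Real.sqrt π := Real.sqrt_pos.2 hππ
    rcases n with _|n1
    · omega
    rcases n1 with _|n2
    · -- n = 1
      norm_num
      rw [base_one hε0 hεπ, Real.Gamma_one_half_eq]
      have h2 : Real.sqrt 2 * Real.sqrt 2 = 2 := Real.mul_self_sqrt (by norm_num)
      have h20 : (0:ℝ) < Real.sqrt 2 := Real.sqrt_pos.2 (by norm_num)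
      have hrw : (2:ℝ) ^ (-(1/2) : ℝ) = (Real.sqrt 2)⁻¹ := by
        rw [Real.rpow_neg (by norm_num), ← Real.sqrt_eq_rpow]
      rw [hrw]
      field_simp
      nlinarith
    rcases n2 with _|N
    · -- n = 2
      norm_num
      rw [base_two hε0, show (3/2:ℝ) = 1/2 + 1 from by norm_num,
        Real.Gamma_add_one (by norm_num : (1/2:ℝ) ≠ 0), Real.Gamma_one_half_eq]
      rw [eq_comm]
      field_simp
    · -- n = N + 3
      have h1le : (1:ℝ) ≤ (N:ℝ) + 1 := by
        have : (0:ℝ) ≤ (N:ℝ) := Nat.cast_nonneg N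
        linarith
      have ihm := ih (N+1) (by omega) (by omega)
      push_cast at ihm ⊢
      rw [show ((N:ℝ) + 1 + 1 + 1 - 2)/2 = ((N:ℝ)+1)/2 from by ring,
          show ((N:ℝ) + 1 + 1 + 1)/2 = ((N:ℝ)+1)/2 + 1 from by ring,
          step hε0 hεπ h1le, ihm]
      have hne1 : ((N:ℝ)+1)/2 ≠ 0 := by positivity
      have hne2 : ((N:ℝ)+1+1)/2 ≠ 0 := by positivity
      rw [Real.Gamma_add_one hne1]
      rw [show ((N:ℝ)+1+1+1+1)/2 = ((N:ℝ)+1+1)/2 + 1 from by ring,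
        Real.Gamma_add_one hne2]
      rw [show -((N:ℝ)+1+1+1)/2 = -((N:ℝ)+1)/2 + (-1) from by ring,
        Real.rpow_add (by norm_num : (0:ℝ) < 2), Real.rpow_neg_one]
      rw [pow_add]
      have hGp1 : 0 < Real.Gamma (((N:ℝ)+1)/2) := Real.Gamma_pos_of_pos (by positivity)
      have hGp2 : 0 < Real.Gamma (((N:ℝ)+1+1)/2) := Real.Gamma_pos_of_pos (by positivity)
      have h2m : (0:ℝ) < (2:ℝ) ^ (-((N:ℝ)+1)/2) := by positivity
      have hN2 : (0:ℝ) < (N:ℝ) + 1 + 1 := by linarith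
      field_simp



theorem integral_cos_sub_cos_rpow_mul_cos (n : ℕ) (hn : 1 ≤ n) (ε : ℝ)
    (hε0 : 0 < ε) (hεπ : ε < π) :
    ∫ x in (0:ℝ)..ε, (Real.cos x - Real.cos ε) ^ (((n : ℝ) - 2) / 2) * Real.cos (n * x / 2)
      = 2 ^ (-(n : ℝ) / 2) * Real.sqrt π
          * (Real.Gamma ((n : ℝ) / 2) / Real.Gamma (((n : ℝ) + 1) / 2))
          * Real.sin ε ^ (n - 1) := by
  have h := key hε0 hεπ n hn
  rw [Jint] at h
  simp only [show ∀ x:ℝ, (n:ℝ)/2 * x = (n:ℝ) * x / 2 from fun x => by ring] at h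
  exact h
end

section
/- For positive integer n and reals μ > 0, θ ≠ 0, the integral ∫₀^∞ (sinh(t/2))^{-n} ((μ/2) coth(t/2))^{-n} (1 + (2θ/(μ coth(t/2)))²)^{-n/2} cos(n arctan(2θ/(μ coth(t/2)))) dt equals (2^n/(μ^{n-1}|θ|)) ∫₀^{2|θ|/μ} (1 - (μ/(2|θ|))² ρ²)^{n/2 - 1} (1+ρ²)^{-n/2} cos(n arctan ρ) dρ, via the substitution ρ = 2θ/(μ coth(t/2)). -/
open Real MeasureTheory Set

lemma tanh_half_hasDerivAt (c t : ℝ) :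
    HasDerivAt (fun t : ℝ => c * (Real.sinh (t / 2) / Real.cosh (t / 2)))
      (c / (2 * Real.cosh (t / 2) ^ 2)) t := by
  have h1 : HasDerivAt (fun t : ℝ => t / 2) (1 / 2) t := (hasDerivAt_id t).div_const 2
  have hs := h1.sinh
  have hc := h1.cosh
  have hch : Real.cosh (t / 2) ≠ 0 := (Real.cosh_pos (t / 2)).ne'
  have hdiv := (hs.div hc hch).const_mul c
  refine hdiv.congr_deriv ?_
  have h := Real.cosh_sq_sub_sinh_sq (t / 2)
  field_simp
  linear_combination c * h

lemma exists_tanh_eq {r : ℝ} (hr0 : 0 < r) (hr1 : r < 1) :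
    ∃ t : ℝ, 0 < t ∧ Real.sinh (t / 2) / Real.cosh (t / 2) = r := by
  have h1r : 0 < 1 - r := by linarith
  refine ⟨Real.log ((1 + r) / (1 - r)), ?_, ?_⟩
  · apply Real.log_pos
    rw [lt_div_iff₀ h1r]
    linarith
  · set t := Real.log ((1 + r) / (1 - r)) with ht
    have hexp : Real.exp t = (1 + r) / (1 - r) := by
      rw [ht, Real.exp_log (by positivity)]
    have hu : Real.exp (t / 2) * Real.exp (t / 2) * (1 - r) = 1 + r := by
      rw [← Real.exp_add]
      have : t / 2 + t / 2 = t := by ring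
      rw [this, hexp]
      field_simp
    have hch : Real.cosh (t / 2) ≠ 0 := (Real.cosh_pos (t / 2)).ne'
    rw [div_eq_iff hch, Real.sinh_eq, Real.cosh_eq, Real.exp_neg]
    have hepos : 0 < Real.exp (t / 2) := Real.exp_pos _
    field_simp
    linear_combination hu

theorem integral_substitution_rho (n : ℕ) (hn : 1 ≤ n) (μ θ : ℝ) (hμ : 0 < μ) (hθ : θ ≠ 0) :
    ∫ t in Ioi (0:ℝ),
        (Real.sinh (t / 2)) ^ (-(n : ℝ))
          * (μ / 2 * (Real.cosh (t / 2) / Real.sinh (t / 2))) ^ (-(n : ℝ))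
          * (1 + (2 * θ / (μ * (Real.cosh (t / 2) / Real.sinh (t / 2)))) ^ 2) ^ (-(n : ℝ) / 2)
          * Real.cos (n * Real.arctan (2 * θ / (μ * (Real.cosh (t / 2) / Real.sinh (t / 2)))))
      = (2 ^ n / (μ ^ (n - 1) * |θ|)) *
          ∫ ρ in (0:ℝ)..(2 * |θ| / μ),
            (1 - (μ / (2 * |θ|)) ^ 2 * ρ ^ 2) ^ ((n : ℝ) / 2 - 1)
              * (1 + ρ ^ 2) ^ (-(n : ℝ) / 2) * Real.cos (n * Real.arctan ρ) := by
  have hθ' : (0:ℝ) < |θ| := abs_pos.mpr hθ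
  set c : ℝ := 2 * |θ| / μ with hcdef
  have hc : 0 < c := by positivity
  set f : ℝ → ℝ := fun t => c * (Real.sinh (t / 2) / Real.cosh (t / 2)) with hfdef
  set f' : ℝ → ℝ := fun t => c / (2 * Real.cosh (t / 2) ^ 2) with hf'def
  set g : ℝ → ℝ := fun ρ =>
      (1 - (μ / (2 * |θ|)) ^ 2 * ρ ^ 2) ^ ((n : ℝ) / 2 - 1)
        * (1 + ρ ^ 2) ^ (-(n : ℝ) / 2) * Real.cos (n * Real.arctan ρ) with hgdef
  have hder : ∀ t : ℝ, HasDerivAt f (f' t) t := fun t => tanh_half_hasDerivAt c t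
  have hmono : StrictMono f :=
    strictMono_of_deriv_pos (fun t => by
      rw [(hder t).deriv]; have := Real.cosh_pos (t / 2); positivity)
  have himg : f '' Ioi (0:ℝ) = Ioo 0 c := by
    apply Set.eq_of_subset_of_subset
    · rintro x ⟨t, ht, rfl⟩
      have ht : 0 < t := ht
      have hs : 0 < Real.sinh (t / 2) := Real.sinh_pos_iff.mpr (by linarith)
      have hch : 0 < Real.cosh (t / 2) := Real.cosh_pos (t / 2)
      constructor
      · simp only [hfdef]
        positivity
      · simp only [hfdef]
        have h1 : Real.sinh (t / 2) / Real.cosh (t / 2) < 1 := by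
          rw [div_lt_one hch]; exact Real.sinh_lt_cosh _
        calc c * (Real.sinh (t / 2) / Real.cosh (t / 2)) < c * 1 :=
              mul_lt_mul_of_pos_left h1 hc
          _ = c := mul_one c
    · rintro x ⟨hx0, hxc⟩
      obtain ⟨t, ht, htanh⟩ := exists_tanh_eq (r := x / c) (by positivity)
        ((div_lt_one hc).mpr hxc)
      exact ⟨t, ht, by simp only [hfdef]; rw [htanh]; field_simp⟩
  have key := integral_image_eq_integral_abs_deriv_smul (s := Ioi (0:ℝ)) measurableSet_Ioi
      (fun t _ => (hder t).hasDerivWithinAt) (hmono.injective.injOn) g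
  rw [himg] at key
  have hRHS : (∫ ρ in (0:ℝ)..c, g ρ) = ∫ ρ in Ioo (0:ℝ) c, g ρ := by
    rw [intervalIntegral.integral_of_le hc.le, MeasureTheory.integral_Ioc_eq_integral_Ioo]
  have hpt : ∀ t ∈ Ioi (0:ℝ),
      (Real.sinh (t / 2)) ^ (-(n : ℝ))
          * (μ / 2 * (Real.cosh (t / 2) / Real.sinh (t / 2))) ^ (-(n : ℝ))
          * (1 + (2 * θ / (μ * (Real.cosh (t / 2) / Real.sinh (t / 2)))) ^ 2) ^ (-(n : ℝ) / 2)
          * Real.cos (n * Real.arctan (2 * θ / (μ * (Real.cosh (t / 2) / Real.sinh (t / 2)))))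
        = (2 ^ n / (μ ^ (n - 1) * |θ|)) * (|f' t| • g (f t)) := by
    intro t ht
    have ht : 0 < t := ht
    have hs : 0 < Real.sinh (t / 2) := Real.sinh_pos_iff.mpr (by linarith)
    have hch : 0 < Real.cosh (t / 2) := Real.cosh_pos (t / 2)
    set s := Real.sinh (t / 2) with hsdef
    set ch := Real.cosh (t / 2) with hchdef
    have hx : 2 * θ / (μ * (ch / s)) = 2 * θ * s / (μ * ch) := by
      field_simp
    have hrho : f t = |2 * θ * s / (μ * ch)| := by
      simp only [hfdef, hcdef, ← hsdef, ← hchdef]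
      rw [abs_div, abs_mul, abs_mul, abs_mul, abs_of_pos hs, abs_of_pos hμ, abs_of_pos hch, abs_two]
      field_simp
    set x := 2 * θ * s / (μ * ch) with hxdef
    have hsq : x ^ 2 = (f t) ^ 2 := by rw [hrho, sq_abs]
    have hcos : Real.cos (n * Real.arctan x) = Real.cos (n * Real.arctan (f t)) := by
      rcases abs_choice x with h | h
      · rw [hrho, h]
      · rw [hrho, h, Real.arctan_neg, mul_neg, Real.cos_neg]
    have hfpos : 0 < f' t := by
      simp only [hf'def, ← hchdef]; positivity
    have h1 : 1 - (μ / (2 * |θ|)) ^ 2 * (f t) ^ 2 = 1 / ch ^ 2 := by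
      have hcs := Real.cosh_sq_sub_sinh_sq (t / 2)
      rw [← hsdef, ← hchdef] at hcs
      simp only [hfdef, hcdef, ← hsdef, ← hchdef]
      field_simp
      linear_combination hcs
    have hch2 : ch ^ (2:ℝ) = ch ^ (2:ℕ) := by
      rw [show ((2:ℝ)) = ((2:ℕ):ℝ) by norm_num, Real.rpow_natCast]
    have h2 : (1 / ch ^ 2 : ℝ) ^ ((n : ℝ) / 2 - 1) = ch ^ 2 * ch ^ (-(n:ℝ)) := by
      have e1 : (1 / ch ^ 2 : ℝ) = ch ^ ((-2 : ℝ)) := by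
        rw [Real.rpow_neg hch.le, hch2, one_div]
      rw [e1, ← Real.rpow_mul hch.le]
      have e2 : (-2 : ℝ) * ((n : ℝ) / 2 - 1) = 2 + (-(n:ℝ)) := by ring
      rw [e2, Real.rpow_add hch, hch2]
    have h3 : s ^ (-(n:ℝ)) * (μ / 2 * (ch / s)) ^ (-(n:ℝ))
        = (μ / 2) ^ (-(n:ℝ)) * ch ^ (-(n:ℝ)) := by
      rw [← Real.mul_rpow hs.le (by positivity)]
      have e3 : s * (μ / 2 * (ch / s)) = μ / 2 * ch := by field_simp
      rw [e3, Real.mul_rpow (by positivity) hch.le]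
    have h4 : (μ / 2 : ℝ) ^ (-(n:ℝ)) = 2 ^ n / μ ^ n := by
      rw [Real.rpow_neg (by positivity), Real.rpow_natCast, div_pow, inv_div]
    have h5 : μ ^ (n - 1) * μ = μ ^ n := by
      rw [← pow_succ, Nat.sub_add_cancel hn]
    simp only [hgdef, smul_eq_mul]
    rw [abs_of_pos hfpos, hx, hsq, hcos, h1, h2, h3, h4]
    simp only [hf'def, ← hchdef, hcdef]
    rw [← h5]
    field_simp
  calc ∫ t in Ioi (0:ℝ),
        (Real.sinh (t / 2)) ^ (-(n : ℝ))
          * (μ / 2 * (Real.cosh (t / 2) / Real.sinh (t / 2))) ^ (-(n : ℝ))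
          * (1 + (2 * θ / (μ * (Real.cosh (t / 2) / Real.sinh (t / 2)))) ^ 2) ^ (-(n : ℝ) / 2)
          * Real.cos (n * Real.arctan (2 * θ / (μ * (Real.cosh (t / 2) / Real.sinh (t / 2)))))
      = ∫ t in Ioi (0:ℝ), (2 ^ n / (μ ^ (n - 1) * |θ|)) * (|f' t| • g (f t)) :=
        MeasureTheory.setIntegral_congr_fun measurableSet_Ioi hpt
    _ = (2 ^ n / (μ ^ (n - 1) * |θ|)) * ∫ t in Ioi (0:ℝ), |f' t| • g (f t) :=
        MeasureTheory.integral_const_mul _ _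
    _ = (2 ^ n / (μ ^ (n - 1) * |θ|)) * ∫ ρ in Ioo (0:ℝ) c, g ρ := by rw [← key]
    _ = (2 ^ n / (μ ^ (n - 1) * |θ|)) * ∫ ρ in (0:ℝ)..c, g ρ := by rw [hRHS]
end
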